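/- arXiv:1806.02561 — 3 statements merged into one kernel-verified Lean document; each statement's English description precedes it below -/
import Mathlib

section
/- For every n ∈ ℕ, 1 ≤ p ≤ ∞, and every real sequence β̄ = (β_k), one has (1/2)‖Φ_{n,πβ_n}‖_p ≤ A_n(p) ≤ (1/2) sup_{θ ∈ ℝ} ‖Φ_{n,θ}‖_p. -/
open MeasureTheory Real Set
open scoped ENNReal

/-- The `L_p` "norm" of a (2π-periodic) function over one period `(0, 2π]`. -/
noncomputable def LpNormPer (p : ℝ≥0∞) (f : ℝ → ℝ) : ℝ :=
  (eLpNorm f p (volume.restrict (Ioc (0:ℝ) (2*π)))).toReal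

/-- `‖cos t‖_p` over one period. -/
noncomputable def cosLp (p : ℝ≥0∞) : ℝ := LpNormPer p Real.cos

/-- Admissible `φ`: 2π-periodic, integrable on a period, `φ ⊥ 1`, `‖φ‖₁ ≤ 1`. -/
def AdmPhi (φ : ℝ → ℝ) : Prop :=
  (∀ t : ℝ, φ (t + 2*π) = φ t) ∧ IntegrableOn φ (Ioc (0:ℝ) (2*π)) volume ∧
  (∫ t in (0:ℝ)..(2*π), φ t) = 0 ∧ (∫ t in (0:ℝ)..(2*π), |φ t|) ≤ 1

/-- `Φ_{n,θ}(x) = cos(nx−θ/2)(1−cos(x−θ)) − sin(nx−θ/2)sin(x−θ)`. -/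
noncomputable def PhiF (n : ℕ) (θ : ℝ) : ℝ → ℝ := fun x =>
  Real.cos ((n:ℝ)*x - θ/2) * (1 - Real.cos (x - θ)) -
    Real.sin ((n:ℝ)*x - θ/2) * Real.sin (x - θ)

/-- `A_n(p) = sup { ‖ sin((2n−1)x/2) ∫₀^{2π} sin(nt − x/2 + πβ_n/2) φ(t) dt ‖_p :
φ ⊥ 1, ‖φ‖₁ ≤ 1 }`. -/
noncomputable def Aq (n : ℕ) (p : ℝ≥0∞) (βb : ℕ → ℝ) : ℝ :=
  sSup { a : ℝ | ∃ φ : ℝ → ℝ, AdmPhi φ ∧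
    a = LpNormPer p (fun x => Real.sin ((2*(n:ℝ) - 1) * x / 2) *
          ∫ t in (0:ℝ)..(2*π), Real.sin ((n:ℝ)*t - x/2 + π * βb n / 2) * φ t) }

lemma two_pi_pos' : (0:ℝ) < 2*π := by positivity

lemma intervalIntegrable_of_bdd {f : ℝ → ℝ} (hm : Measurable f) {C : ℝ}
    (hb : ∀ x, |f x| ≤ C) (a b : ℝ) : IntervalIntegrable f volume a b := by
  rw [intervalIntegrable_iff]
  refine Integrable.mono' (g := fun _ => C) ?_ hm.aestronglyMeasurable.restrict ?_
  · exact integrableOn_const measure_Ioc_lt_top.ne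
  · exact ae_of_all _ fun x => by simpa [Real.norm_eq_abs] using hb x

lemma II_of {φ : ℝ → ℝ} (hint : IntegrableOn φ (Ioc (0:ℝ) (2*π)) volume) :
    IntervalIntegrable φ volume 0 (2*π) := by
  rw [intervalIntegrable_iff, uIoc_of_le two_pi_pos'.le]; exact hint

lemma II_mul {φ : ℝ → ℝ} (w : ℝ → ℝ) (hint : IntegrableOn φ (Ioc (0:ℝ) (2*π)) volume)
    (h : Continuous w) (hw : ∀ x, |w x| ≤ 1) :
    IntervalIntegrable (fun t => w t * φ t) volume 0 (2*π) := by
  rw [intervalIntegrable_iff, uIoc_of_le two_pi_pos'.le]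
  exact Integrable.bdd_mul (c := 1) hint h.aestronglyMeasurable (ae_of_all _ fun x => by simpa [Real.norm_eq_abs] using hw x)

lemma cos_two_mul'' (y : ℝ) : Real.cos (2*y) = 1 - 2 * Real.sin y ^ 2 := by
  rw [Real.cos_two_mul']; linear_combination (Real.sin_sq_add_cos_sq y)

lemma lp_nonneg (p : ℝ≥0∞) (f : ℝ → ℝ) : 0 ≤ LpNormPer p f := ENNReal.toReal_nonneg

lemma lp_smul (p : ℝ≥0∞) (c : ℝ) (f : ℝ → ℝ) :
    LpNormPer p (fun x => c * f x) = |c| * LpNormPer p f := by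
  unfold LpNormPer
  have : (fun x => c * f x) = c • f := rfl
  rw [this, eLpNorm_const_smul, ENNReal.toReal_mul]
  simp [Real.norm_eq_abs]

noncomputable def Ub (p : ℝ≥0∞) : ℝ :=
  ((ENNReal.ofReal (2*π)) ^ p.toReal⁻¹ * ENNReal.ofReal 2).toReal

lemma lp_bound (p : ℝ≥0∞) {f : ℝ → ℝ} (hf : ∀ x, |f x| ≤ 2) :
    LpNormPer p f ≤ Ub p := by
  unfold LpNormPer Ub
  apply ENNReal.toReal_mono
  · exact ENNReal.mul_ne_top (ENNReal.rpow_ne_top_of_nonneg (by positivity) ENNReal.ofReal_ne_top)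
      ENNReal.ofReal_ne_top
  · have := eLpNorm_le_of_ae_bound (p := p) (μ := volume.restrict (Ioc (0:ℝ) (2*π)))
      (f := f) (C := 2) (ae_of_all _ fun x => by simpa [Real.norm_eq_abs] using hf x)
    simpa [Measure.restrict_apply_univ, Real.volume_Ioc] using this

lemma phi_eq (n : ℕ) (θ x : ℝ) :
    PhiF n θ x = 2 * Real.sin ((θ - x)/2) * Real.sin ((2*(n:ℝ) - 1) * x / 2) := by
  have harg : 2 * ((x - θ)/2) = x - θ := by ring
  have e2 := cos_two_mul'' ((x - θ)/2); rw [harg] at e2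
  have e3 := Real.sin_two_mul ((x - θ)/2); rw [harg] at e3
  have e4 : Real.sin ((θ - x)/2) = -Real.sin ((x - θ)/2) := by
    rw [show (θ - x)/2 = -((x - θ)/2) by ring, Real.sin_neg]
  have e1 : Real.cos ((n:ℝ)*x - θ/2)
      = Real.cos ((2*(n:ℝ) - 1) * x / 2) * Real.cos ((x - θ)/2)
        - Real.sin ((2*(n:ℝ) - 1) * x / 2) * Real.sin ((x - θ)/2) := by
    rw [← Real.cos_add]; ring_nf
  have e5 : Real.sin ((n:ℝ)*x - θ/2)
      = Real.sin ((2*(n:ℝ) - 1) * x / 2) * Real.cos ((x - θ)/2)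
        + Real.cos ((2*(n:ℝ) - 1) * x / 2) * Real.sin ((x - θ)/2) := by
    rw [← Real.sin_add]; ring_nf
  simp only [PhiF]
  rw [e1, e5, e2, e3, e4]
  linear_combination (-2 * Real.sin ((2*(n:ℝ) - 1) * x / 2) * Real.sin ((x - θ)/2)) *
    (Real.sin_sq_add_cos_sq ((x - θ)/2))

lemma phi_abs_le (n : ℕ) (θ x : ℝ) : |PhiF n θ x| ≤ 2 := by
  rw [phi_eq, abs_mul, abs_mul, abs_two]
  have h1 := Real.abs_sin_le_one ((θ - x)/2)
  have h2 := Real.abs_sin_le_one ((2*(n:ℝ) - 1) * x / 2)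
  have := abs_nonneg (Real.sin ((θ - x)/2))
  nlinarith [abs_nonneg (Real.sin ((2*(n:ℝ) - 1) * x / 2))]

lemma inner_sin_eq {φ : ℝ → ℝ} (hint : IntegrableOn φ (Ioc (0:ℝ) (2*π)) volume) (n : ℕ) (c : ℝ) :
    ∫ t in (0:ℝ)..(2*π), Real.sin ((n:ℝ)*t + c) * φ t
      = (∫ t in (0:ℝ)..(2*π), Real.cos ((n:ℝ)*t) * φ t) * Real.sin c
        + (∫ t in (0:ℝ)..(2*π), Real.sin ((n:ℝ)*t) * φ t) * Real.cos c := by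
  have h1 : IntervalIntegrable (fun t => Real.cos ((n:ℝ)*t) * φ t) volume 0 (2*π) :=
    II_mul _ hint (Real.continuous_cos.comp (continuous_const.mul continuous_id))
      (fun x => Real.abs_cos_le_one _)
  have h2 : IntervalIntegrable (fun t => Real.sin ((n:ℝ)*t) * φ t) volume 0 (2*π) :=
    II_mul _ hint (Real.continuous_sin.comp (continuous_const.mul continuous_id))
      (fun x => Real.abs_sin_le_one _)
  have congr1 : ∫ t in (0:ℝ)..(2*π), Real.sin ((n:ℝ)*t + c) * φ t
      = ∫ t in (0:ℝ)..(2*π), ((Real.cos ((n:ℝ)*t) * φ t) * Real.sin c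
          + (Real.sin ((n:ℝ)*t) * φ t) * Real.cos c) := by
    refine intervalIntegral.integral_congr fun t _ => ?_
    rw [Real.sin_add]; ring
  rw [congr1, intervalIntegral.integral_add (h1.mul_const _) (h2.mul_const _),
    intervalIntegral.integral_mul_const, intervalIntegral.integral_mul_const]

lemma inner_cos_eq {φ : ℝ → ℝ} (hint : IntegrableOn φ (Ioc (0:ℝ) (2*π)) volume) (n : ℕ) (c : ℝ) :
    ∫ t in (0:ℝ)..(2*π), Real.cos ((n:ℝ)*t - c) * φ t
      = (∫ t in (0:ℝ)..(2*π), Real.cos ((n:ℝ)*t) * φ t) * Real.cos c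
        + (∫ t in (0:ℝ)..(2*π), Real.sin ((n:ℝ)*t) * φ t) * Real.sin c := by
  have h1 : IntervalIntegrable (fun t => Real.cos ((n:ℝ)*t) * φ t) volume 0 (2*π) :=
    II_mul _ hint (Real.continuous_cos.comp (continuous_const.mul continuous_id))
      (fun x => Real.abs_cos_le_one _)
  have h2 : IntervalIntegrable (fun t => Real.sin ((n:ℝ)*t) * φ t) volume 0 (2*π) :=
    II_mul _ hint (Real.continuous_sin.comp (continuous_const.mul continuous_id))
      (fun x => Real.abs_sin_le_one _)
  have congr1 : ∫ t in (0:ℝ)..(2*π), Real.cos ((n:ℝ)*t - c) * φ t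
      = ∫ t in (0:ℝ)..(2*π), ((Real.cos ((n:ℝ)*t) * φ t) * Real.cos c
          + (Real.sin ((n:ℝ)*t) * φ t) * Real.sin c) := by
    refine intervalIntegral.integral_congr fun t _ => ?_
    rw [Real.cos_sub]; ring
  rw [congr1, intervalIntegral.integral_add (h1.mul_const _) (h2.mul_const _),
    intervalIntegral.integral_mul_const, intervalIntegral.integral_mul_const]
/-- Generic representation of the function appearing in `Aq`. -/
lemma fun_repr {φ : ℝ → ℝ} (hint : IntegrableOn φ (Ioc (0:ℝ) (2*π)) volume) (n : ℕ) (θ : ℝ) :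
    (fun x => Real.sin ((2*(n:ℝ) - 1) * x / 2) *
        ∫ t in (0:ℝ)..(2*π), Real.sin ((n:ℝ)*t - x/2 + θ / 2) * φ t)
      = fun x => Real.sin ((2*(n:ℝ) - 1) * x / 2) *
          ((∫ t in (0:ℝ)..(2*π), Real.cos ((n:ℝ)*t) * φ t) * Real.sin ((θ - x)/2)
            + (∫ t in (0:ℝ)..(2*π), Real.sin ((n:ℝ)*t) * φ t) * Real.cos ((θ - x)/2)) := by
  funext x
  have h1 : ∫ t in (0:ℝ)..(2*π), Real.sin ((n:ℝ)*t - x/2 + θ / 2) * φ t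
      = ∫ t in (0:ℝ)..(2*π), Real.sin ((n:ℝ)*t + (θ - x)/2) * φ t := by
    refine intervalIntegral.integral_congr fun t _ => ?_
    rw [show (n:ℝ)*t - x/2 + θ / 2 = (n:ℝ)*t + (θ - x)/2 by ring]
  rw [h1, inner_sin_eq hint n ((θ - x)/2)]

lemma element_formula (n : ℕ) (p : ℝ≥0∞) (θ : ℝ) {φ : ℝ → ℝ} (hφ : AdmPhi φ) :
    ∃ r α : ℝ, 0 ≤ r ∧ r ≤ 1 ∧
      LpNormPer p (fun x => Real.sin ((2*(n:ℝ) - 1) * x / 2) *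
          ∫ t in (0:ℝ)..(2*π), Real.sin ((n:ℝ)*t - x/2 + θ / 2) * φ t)
        = (r/2) * LpNormPer p (PhiF n (θ + 2*α)) := by
  obtain ⟨hper, hint, hzero, hone⟩ := hφ
  set A := ∫ t in (0:ℝ)..(2*π), Real.cos ((n:ℝ)*t) * φ t with hAdef
  set B := ∫ t in (0:ℝ)..(2*π), Real.sin ((n:ℝ)*t) * φ t with hBdef
  set z : ℂ := ⟨A, B⟩ with hz
  set r := ‖z‖ with hrdef
  set α := Complex.arg z with hadef
  have hA : r * Real.cos α = A := Complex.norm_mul_cos_arg z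
  have hB : r * Real.sin α = B := Complex.norm_mul_sin_arg z
  have hr0 : 0 ≤ r := norm_nonneg z
  have hr1 : r ≤ 1 := by
    have hcomb : A * Real.cos α + B * Real.sin α
        = ∫ t in (0:ℝ)..(2*π), Real.cos ((n:ℝ)*t - α) * φ t := by
      rw [inner_cos_eq hint n α]
    have hb1 : (∫ t in (0:ℝ)..(2*π), Real.cos ((n:ℝ)*t - α) * φ t)
        ≤ ∫ t in (0:ℝ)..(2*π), |φ t| := by
      refine intervalIntegral.integral_mono_on two_pi_pos'.le ?_ ((II_of hint).abs) ?_
      · exact II_mul _ hint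
          (Real.continuous_cos.comp ((continuous_const.mul continuous_id).sub continuous_const))
          (fun x => Real.abs_cos_le_one _)
      · intro t _
        calc Real.cos ((n:ℝ)*t - α) * φ t ≤ |Real.cos ((n:ℝ)*t - α) * φ t| := le_abs_self _
          _ = |Real.cos ((n:ℝ)*t - α)| * |φ t| := abs_mul _ _
          _ ≤ 1 * |φ t| := by
              exact mul_le_mul_of_nonneg_right (Real.abs_cos_le_one _) (abs_nonneg _)
          _ = |φ t| := one_mul _
    have hr : r = A * Real.cos α + B * Real.sin α := by
      rw [← hA, ← hB]
      linear_combination (-r) * Real.sin_sq_add_cos_sq α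
    rw [hr, hcomb]
    exact le_trans hb1 hone
  refine ⟨r, α, hr0, hr1, ?_⟩
  rw [fun_repr hint n θ]
  have hfun : (fun x => Real.sin ((2*(n:ℝ) - 1) * x / 2) *
      (A * Real.sin ((θ - x)/2) + B * Real.cos ((θ - x)/2)))
      = fun x => (r/2) * PhiF n (θ + 2*α) x := by
    funext x
    rw [phi_eq n (θ + 2*α) x,
      show (θ + 2*α - x)/2 = (θ - x)/2 + α by ring, Real.sin_add, ← hA, ← hB]
    ring
  rw [hfun, lp_smul, abs_of_nonneg (by positivity)]
/-! ### The test functions used for the lower bound -/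

noncomputable def gFun (ε : ℝ) : ℝ → ℝ := fun u =>
  (if Real.cos ε ≤ Real.cos u then (1:ℝ) else 0) -
    (if Real.cos u ≤ -Real.cos ε then (1:ℝ) else 0)

lemma g_cos_congr {ε u v : ℝ} (h : Real.cos u = Real.cos v) : gFun ε u = gFun ε v := by
  simp only [gFun, h]

lemma g_meas (ε : ℝ) : Measurable (gFun ε) := by
  refine Measurable.sub (Measurable.ite ?_ measurable_const measurable_const)
    (Measurable.ite ?_ measurable_const measurable_const)
  · exact measurableSet_le measurable_const Real.continuous_cos.measurable
  · exact measurableSet_le Real.continuous_cos.measurable measurable_const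

lemma g_abs_le (ε u : ℝ) : |gFun ε u| ≤ 1 := by
  simp only [gFun]; split_ifs <;> norm_num

lemma g_per (ε : ℝ) : Function.Periodic (gFun ε) (2*π) := fun u =>
  g_cos_congr (Real.cos_add_two_pi u)

lemma hIg (ε : ℝ) : ∀ a b, IntervalIntegrable (gFun ε) volume a b :=
  fun a b => intervalIntegrable_of_bdd (g_meas ε) (g_abs_le ε) a b

section resolution
variable {ε : ℝ} (hε : 0 < ε) (hε2 : ε < π/2)
include hε hε2

lemma cosε_pos : 0 < Real.cos ε := Real.cos_pos_of_mem_Ioo ⟨by linarith, hε2⟩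

lemma g1 : ∀ u ∈ Ioo (0:ℝ) ε, gFun ε u = 1 := by
  intro u hu
  obtain ⟨hu1, hu2⟩ := hu
  have hπ := Real.pi_pos
  have h1 : Real.cos ε < Real.cos u :=
    Real.strictAntiOn_cos ⟨hu1.le, by linarith⟩ ⟨by linarith, by linarith⟩ hu2
  have h2 := cosε_pos hε hε2
  simp only [gFun]
  rw [if_pos h1.le, if_neg (by linarith)]
  norm_num

lemma g2 : ∀ u ∈ Ioo ε (π - ε), gFun ε u = 0 := by
  intro u hu
  obtain ⟨hu1, hu2⟩ := hu
  have hπ := Real.pi_pos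
  have h1 : Real.cos u < Real.cos ε :=
    Real.strictAntiOn_cos ⟨by linarith, by linarith⟩ ⟨by linarith, by linarith⟩ hu1
  have h2 : Real.cos (π - ε) < Real.cos u :=
    Real.strictAntiOn_cos ⟨by linarith, by linarith⟩ ⟨by linarith, by linarith⟩ hu2
  rw [Real.cos_pi_sub] at h2
  simp only [gFun]
  rw [if_neg (by linarith), if_neg (by linarith)]
  norm_num

lemma g3 : ∀ u ∈ Ioo (π - ε) (π + ε), gFun ε u = -1 := by
  intro u hu
  obtain ⟨hu1, hu2⟩ := hu
  have hπ := Real.pi_pos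
  have hkey : Real.cos u < Real.cos (π - ε) := by
    rcases le_or_gt u π with h | h
    · exact Real.strictAntiOn_cos ⟨by linarith, by linarith⟩ ⟨by linarith, h⟩ hu1
    · have hc : Real.cos u = Real.cos (2*π - u) := (Real.cos_two_pi_sub u).symm
      rw [hc]
      exact Real.strictAntiOn_cos ⟨by linarith, by linarith⟩ ⟨by linarith, by linarith⟩
        (by linarith)
  rw [Real.cos_pi_sub] at hkey
  have h2 := cosε_pos hε hε2
  simp only [gFun]
  rw [if_neg (by linarith), if_pos hkey.le]
  norm_num

lemma g4 : ∀ u ∈ Ioo (π + ε) (2*π - ε), gFun ε u = 0 := by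
  intro u hu
  obtain ⟨hu1, hu2⟩ := hu
  have hπ := Real.pi_pos
  have hc : Real.cos u = Real.cos (2*π - u) := (Real.cos_two_pi_sub u).symm
  rw [g_cos_congr hc]
  exact g2 hε hε2 (2*π - u) ⟨by linarith, by linarith⟩

lemma g5 : ∀ u ∈ Ioo (2*π - ε) (2*π), gFun ε u = 1 := by
  intro u hu
  obtain ⟨hu1, hu2⟩ := hu
  have hc : Real.cos u = Real.cos (2*π - u) := (Real.cos_two_pi_sub u).symm
  rw [g_cos_congr hc]
  exact g1 hε hε2 (2*π - u) ⟨by linarith, by linarith⟩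

end resolution

lemma intInt_congr_Ioo {f₁ f₂ : ℝ → ℝ} {a b : ℝ} (hab : a ≤ b)
    (h : ∀ x ∈ Ioo a b, f₁ x = f₂ x) :
    ∫ x in a..b, f₁ x = ∫ x in a..b, f₂ x := by
  rw [intervalIntegral.integral_of_le hab, intervalIntegral.integral_of_le hab,
    integral_Ioc_eq_integral_Ioo, integral_Ioc_eq_integral_Ioo]
  exact setIntegral_congr_fun measurableSet_Ioo h

lemma five_split {ε : ℝ} {F : ℝ → ℝ} (hI : ∀ a b, IntervalIntegrable F volume a b) :
    ∫ x in (0:ℝ)..(2*π), F x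
      = (∫ x in (0:ℝ)..ε, F x) + (∫ x in ε..(π-ε), F x) + (∫ x in (π-ε)..(π+ε), F x)
        + (∫ x in (π+ε)..(2*π-ε), F x) + (∫ x in (2*π-ε)..(2*π), F x) := by
  rw [intervalIntegral.integral_add_adjacent_intervals (hI 0 ε) (hI ε (π-ε)),
    intervalIntegral.integral_add_adjacent_intervals (hI 0 (π-ε)) (hI (π-ε) (π+ε)),
    intervalIntegral.integral_add_adjacent_intervals (hI 0 (π+ε)) (hI (π+ε) (2*π-ε)),
    intervalIntegral.integral_add_adjacent_intervals (hI 0 (2*π-ε)) (hI (2*π-ε) (2*π))]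

section baseIntegrals
variable {ε : ℝ} (hε : 0 < ε) (hε2 : ε < π/2)
include hε hε2

lemma int_g : ∫ u in (0:ℝ)..(2*π), gFun ε u = 0 := by
  have hπ := Real.pi_pos
  have p1 : ∫ u in (0:ℝ)..ε, gFun ε u = ε := by
    rw [intInt_congr_Ioo (f₂ := fun _ => (1:ℝ)) hε.le (g1 hε hε2)]; simp
  have p2 : ∫ u in ε..(π-ε), gFun ε u = 0 := by
    rw [intInt_congr_Ioo (f₂ := fun _ => (0:ℝ)) (by linarith) (g2 hε hε2)]; simp
  have p3 : ∫ u in (π-ε)..(π+ε), gFun ε u = -(2*ε) := by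
    rw [intInt_congr_Ioo (f₂ := fun _ => (-1:ℝ)) (by linarith) (g3 hε hε2)]; simp; ring
  have p4 : ∫ u in (π+ε)..(2*π-ε), gFun ε u = 0 := by
    rw [intInt_congr_Ioo (f₂ := fun _ => (0:ℝ)) (by linarith) (g4 hε hε2)]; simp
  have p5 : ∫ u in (2*π-ε)..(2*π), gFun ε u = ε := by
    rw [intInt_congr_Ioo (f₂ := fun _ => (1:ℝ)) (by linarith) (g5 hε hε2)]; simp
  rw [five_split (ε := ε) (hIg ε), p1, p2, p3, p4, p5]; ring

lemma int_abs_g : ∫ u in (0:ℝ)..(2*π), |gFun ε u| = 4*ε := by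
  have hπ := Real.pi_pos
  have hI : ∀ a b, IntervalIntegrable (fun u => |gFun ε u|) volume a b :=
    fun a b => (hIg ε a b).abs
  have p1 : ∫ u in (0:ℝ)..ε, |gFun ε u| = ε := by
    rw [intInt_congr_Ioo (f₂ := fun _ => (1:ℝ)) hε.le
      (fun u hu => by rw [g1 hε hε2 u hu]; norm_num)]; simp
  have p2 : ∫ u in ε..(π-ε), |gFun ε u| = 0 := by
    rw [intInt_congr_Ioo (f₂ := fun _ => (0:ℝ)) (by linarith)
      (fun u hu => by rw [g2 hε hε2 u hu]; norm_num)]; simp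
  have p3 : ∫ u in (π-ε)..(π+ε), |gFun ε u| = 2*ε := by
    rw [intInt_congr_Ioo (f₂ := fun _ => (1:ℝ)) (by linarith)
      (fun u hu => by rw [g3 hε hε2 u hu]; norm_num)]; simp; ring
  have p4 : ∫ u in (π+ε)..(2*π-ε), |gFun ε u| = 0 := by
    rw [intInt_congr_Ioo (f₂ := fun _ => (0:ℝ)) (by linarith)
      (fun u hu => by rw [g4 hε hε2 u hu]; norm_num)]; simp
  have p5 : ∫ u in (2*π-ε)..(2*π), |gFun ε u| = ε := by
    rw [intInt_congr_Ioo (f₂ := fun _ => (1:ℝ)) (by linarith)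
      (fun u hu => by rw [g5 hε hε2 u hu]; norm_num)]; simp
  rw [five_split (ε := ε) hI, p1, p2, p3, p4, p5]; ring

lemma int_cos_g : ∫ u in (0:ℝ)..(2*π), Real.cos u * gFun ε u = 4 * Real.sin ε := by
  have hπ := Real.pi_pos
  have hI : ∀ a b, IntervalIntegrable (fun u => Real.cos u * gFun ε u) volume a b := fun a b =>
    intervalIntegrable_of_bdd (Real.continuous_cos.measurable.mul (g_meas ε)) (C := 1)
      (fun x => by
        rw [Pi.mul_apply, abs_mul]
        exact mul_le_one₀ (Real.abs_cos_le_one x) (abs_nonneg _) (g_abs_le ε x)) a b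
  have e1 : Real.sin (π + ε) = -Real.sin ε := by rw [Real.sin_add]; simp
  have e2 : Real.sin (π - ε) = Real.sin ε := Real.sin_pi_sub ε
  have e3 : Real.sin (2*π - ε) = -Real.sin ε := Real.sin_two_pi_sub ε
  have p1 : ∫ u in (0:ℝ)..ε, Real.cos u * gFun ε u = Real.sin ε := by
    rw [intInt_congr_Ioo (f₂ := fun u => Real.cos u) hε.le
      (fun u hu => by rw [g1 hε hε2 u hu, mul_one])]
    rw [integral_cos]; simp
  have p2 : ∫ u in ε..(π-ε), Real.cos u * gFun ε u = 0 := by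
    rw [intInt_congr_Ioo (f₂ := fun _ => (0:ℝ)) (by linarith)
      (fun u hu => by rw [g2 hε hε2 u hu, mul_zero])]; simp
  have p3 : ∫ u in (π-ε)..(π+ε), Real.cos u * gFun ε u = 2 * Real.sin ε := by
    rw [intInt_congr_Ioo (f₂ := fun u => -Real.cos u) (by linarith)
      (fun u hu => by rw [g3 hε hε2 u hu]; ring)]
    rw [intervalIntegral.integral_neg, integral_cos, e1, e2]; ring
  have p4 : ∫ u in (π+ε)..(2*π-ε), Real.cos u * gFun ε u = 0 := by
    rw [intInt_congr_Ioo (f₂ := fun _ => (0:ℝ)) (by linarith)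
      (fun u hu => by rw [g4 hε hε2 u hu, mul_zero])]; simp
  have p5 : ∫ u in (2*π-ε)..(2*π), Real.cos u * gFun ε u = Real.sin ε := by
    rw [intInt_congr_Ioo (f₂ := fun u => Real.cos u) (by linarith)
      (fun u hu => by rw [g5 hε hε2 u hu, mul_one])]
    rw [integral_cos, Real.sin_two_pi, e3]; ring
  rw [five_split (ε := ε) hI, p1, p2, p3, p4, p5]; ring

lemma int_sin_g : ∫ u in (0:ℝ)..(2*π), Real.sin u * gFun ε u = 0 := by
  have hπ := Real.pi_pos
  have hI : ∀ a b, IntervalIntegrable (fun u => Real.sin u * gFun ε u) volume a b := fun a b =>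
    intervalIntegrable_of_bdd (Real.continuous_sin.measurable.mul (g_meas ε)) (C := 1)
      (fun x => by
        rw [Pi.mul_apply, abs_mul]
        exact mul_le_one₀ (Real.abs_sin_le_one x) (abs_nonneg _) (g_abs_le ε x)) a b
  have e1 : Real.cos (π + ε) = -Real.cos ε := by rw [Real.cos_add]; simp
  have e2 : Real.cos (π - ε) = -Real.cos ε := Real.cos_pi_sub ε
  have e3 : Real.cos (2*π - ε) = Real.cos ε := Real.cos_two_pi_sub ε
  have p1 : ∫ u in (0:ℝ)..ε, Real.sin u * gFun ε u = 1 - Real.cos ε := by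
    rw [intInt_congr_Ioo (f₂ := fun u => Real.sin u) hε.le
      (fun u hu => by rw [g1 hε hε2 u hu, mul_one])]
    rw [integral_sin]; simp
  have p2 : ∫ u in ε..(π-ε), Real.sin u * gFun ε u = 0 := by
    rw [intInt_congr_Ioo (f₂ := fun _ => (0:ℝ)) (by linarith)
      (fun u hu => by rw [g2 hε hε2 u hu, mul_zero])]; simp
  have p3 : ∫ u in (π-ε)..(π+ε), Real.sin u * gFun ε u = 0 := by
    rw [intInt_congr_Ioo (f₂ := fun u => -Real.sin u) (by linarith)
      (fun u hu => by rw [g3 hε hε2 u hu]; ring)]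
    rw [intervalIntegral.integral_neg, integral_sin, e1, e2]; ring
  have p4 : ∫ u in (π+ε)..(2*π-ε), Real.sin u * gFun ε u = 0 := by
    rw [intInt_congr_Ioo (f₂ := fun _ => (0:ℝ)) (by linarith)
      (fun u hu => by rw [g4 hε hε2 u hu, mul_zero])]; simp
  have p5 : ∫ u in (2*π-ε)..(2*π), Real.sin u * gFun ε u = Real.cos ε - 1 := by
    rw [intInt_congr_Ioo (f₂ := fun u => Real.sin u) (by linarith)
      (fun u hu => by rw [g5 hε hε2 u hu, mul_one])]
    rw [integral_sin, Real.cos_two_pi, e3]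
  rw [five_split (ε := ε) hI, p1, p2, p3, p4, p5]; ring

end baseIntegrals

/-- Substitution `u = n t` for `2π`-periodic integrands. -/
lemma per_sub {F : ℝ → ℝ} (hF : Function.Periodic F (2*π))
    (hI : ∀ a b, IntervalIntegrable F volume a b) {n : ℕ} (hn : 1 ≤ n) :
    ∫ t in (0:ℝ)..(2*π), F ((n:ℝ)*t) = ∫ u in (0:ℝ)..(2*π), F u := by
  have hn0 : (n:ℝ) ≠ 0 := Nat.cast_ne_zero.mpr (by omega)
  rw [intervalIntegral.integral_comp_mul_left F hn0]
  have h2 := hF.intervalIntegral_add_zsmul_eq (n:ℤ) 0 hI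
  simp only [zero_add, zsmul_eq_mul, Int.cast_natCast] at h2
  rw [mul_zero, h2, smul_eq_mul]
  field_simp
noncomputable def testφ (n : ℕ) (ε : ℝ) : ℝ → ℝ := fun t => (4*ε)⁻¹ * gFun ε ((n:ℝ)*t)

lemma tφ_meas (n : ℕ) (ε : ℝ) : Measurable (testφ n ε) :=
  measurable_const.mul ((g_meas ε).comp (measurable_id.const_mul _))

lemma tφ_bdd {ε : ℝ} (hε : 0 < ε) (n : ℕ) : ∀ t, |testφ n ε t| ≤ (4*ε)⁻¹ := by
  intro t
  have h4 : (0:ℝ) < (4*ε)⁻¹ := by positivity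
  simp only [testφ, abs_mul, abs_of_pos h4]
  calc (4*ε)⁻¹ * |gFun ε ((n:ℝ)*t)| ≤ (4*ε)⁻¹ * 1 :=
        mul_le_mul_of_nonneg_left (g_abs_le ε _) h4.le
    _ = (4*ε)⁻¹ := mul_one _

lemma tφ_int {ε : ℝ} (hε : 0 < ε) (n : ℕ) :
    IntegrableOn (testφ n ε) (Ioc (0:ℝ) (2*π)) volume := by
  have := intervalIntegrable_of_bdd (tφ_meas n ε) (tφ_bdd hε n) 0 (2*π)
  rwa [intervalIntegrable_iff, uIoc_of_le two_pi_pos'.le] at this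

lemma tφ_per (n : ℕ) (ε : ℝ) : ∀ t, testφ n ε (t + 2*π) = testφ n ε t := by
  intro t
  simp only [testφ]
  congr 1
  apply g_cos_congr
  rw [show (n:ℝ)*(t + 2*π) = (n:ℝ)*t + (n:ℝ)*(2*π) by ring]
  exact Real.cos_add_nat_mul_two_pi _ n

section tphiIntegrals
variable {n : ℕ} (hn : 1 ≤ n) {ε : ℝ} (hε : 0 < ε) (hε2 : ε < π/2)
include hn hε hε2

lemma tφ_zero : ∫ t in (0:ℝ)..(2*π), testφ n ε t = 0 := by
  simp only [testφ]
  rw [intervalIntegral.integral_const_mul, per_sub (g_per ε) (hIg ε) hn, int_g hε hε2, mul_zero]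

lemma tφ_one : ∫ t in (0:ℝ)..(2*π), |testφ n ε t| = 1 := by
  have h4 : (0:ℝ) < (4*ε)⁻¹ := by positivity
  have hcong : ∀ t, |testφ n ε t| = (4*ε)⁻¹ * |gFun ε ((n:ℝ)*t)| := fun t => by
    simp only [testφ, abs_mul, abs_of_pos h4]
  rw [intervalIntegral.integral_congr (fun t _ => hcong t),
    intervalIntegral.integral_const_mul,
    per_sub (F := fun u => |gFun ε u|) (fun u => congrArg abs (g_per ε u))
      (fun a b => (hIg ε a b).abs) hn,
    int_abs_g hε hε2]
  field_simp

lemma tφ_A : ∫ t in (0:ℝ)..(2*π), Real.cos ((n:ℝ)*t) * testφ n ε t = Real.sin ε / ε := by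
  have hI : ∀ a b, IntervalIntegrable (fun u => Real.cos u * gFun ε u) volume a b := fun a b =>
    intervalIntegrable_of_bdd (Real.continuous_cos.measurable.mul (g_meas ε)) (C := 1)
      (fun x => by
        rw [Pi.mul_apply, abs_mul]
        exact mul_le_one₀ (Real.abs_cos_le_one x) (abs_nonneg _) (g_abs_le ε x)) a b
  have hcong : ∀ t, Real.cos ((n:ℝ)*t) * testφ n ε t
      = (4*ε)⁻¹ * ((fun u => Real.cos u * gFun ε u) ((n:ℝ)*t)) := fun t => by
    simp only [testφ]; ring
  rw [intervalIntegral.integral_congr (fun t _ => hcong t),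
    intervalIntegral.integral_const_mul,
    per_sub (F := fun u => Real.cos u * gFun ε u)
      (fun u => by simp only; rw [Real.cos_add_two_pi, g_per ε u]) hI hn,
    int_cos_g hε hε2]
  field_simp

lemma tφ_B : ∫ t in (0:ℝ)..(2*π), Real.sin ((n:ℝ)*t) * testφ n ε t = 0 := by
  have hI : ∀ a b, IntervalIntegrable (fun u => Real.sin u * gFun ε u) volume a b := fun a b =>
    intervalIntegrable_of_bdd (Real.continuous_sin.measurable.mul (g_meas ε)) (C := 1)
      (fun x => by
        rw [Pi.mul_apply, abs_mul]
        exact mul_le_one₀ (Real.abs_sin_le_one x) (abs_nonneg _) (g_abs_le ε x)) a b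
  have hcong : ∀ t, Real.sin ((n:ℝ)*t) * testφ n ε t
      = (4*ε)⁻¹ * ((fun u => Real.sin u * gFun ε u) ((n:ℝ)*t)) := fun t => by
    simp only [testφ]; ring
  rw [intervalIntegral.integral_congr (fun t _ => hcong t),
    intervalIntegral.integral_const_mul,
    per_sub (F := fun u => Real.sin u * gFun ε u)
      (fun u => by simp only; rw [Real.sin_add_two_pi, g_per ε u]) hI hn,
    int_sin_g hε hε2]
  simp

lemma tφ_adm : AdmPhi (testφ n ε) :=
  ⟨tφ_per n ε, tφ_int hε n, tφ_zero hn hε hε2, le_of_eq (tφ_one hn hε hε2)⟩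

lemma test_value (p : ℝ≥0∞) (θ : ℝ) :
    LpNormPer p (fun x => Real.sin ((2*(n:ℝ) - 1) * x / 2) *
        ∫ t in (0:ℝ)..(2*π), Real.sin ((n:ℝ)*t - x/2 + θ / 2) * testφ n ε t)
      = (Real.sin ε / ε) * ((1/2) * LpNormPer p (PhiF n θ)) := by
  rw [fun_repr (tφ_int hε n) n θ]
  simp only [tφ_A hn hε hε2, tφ_B hn hε hε2]
  have hfn : (fun x => Real.sin ((2*(n:ℝ) - 1) * x / 2) *
      (Real.sin ε / ε * Real.sin ((θ - x)/2) + 0 * Real.cos ((θ - x)/2)))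
      = fun x => (Real.sin ε / ε / 2) * PhiF n θ x := by
    funext x
    rw [phi_eq n θ x]
    ring
  rw [hfn, lp_smul, abs_of_nonneg ?hnn]
  case hnn =>
    have hs : 0 ≤ Real.sin ε := Real.sin_nonneg_of_nonneg_of_le_pi hε.le
      (by linarith [Real.pi_pos])
    positivity
  ring

end tphiIntegrals

/-- **Estimate (15).** `(1/2)‖Φ_{n,πβ_n}‖_p ≤ A_n(p) ≤ (1/2) sup_{θ∈ℝ} ‖Φ_{n,θ}‖_p`. -/
theorem statement10 :
    ∀ (n : ℕ), 1 ≤ n → ∀ (p : ℝ≥0∞), 1 ≤ p → ∀ (βb : ℕ → ℝ),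
      (1/2) * LpNormPer p (PhiF n (π * βb n)) ≤ Aq n p βb ∧
      Aq n p βb ≤ (1/2) * ⨆ θ : ℝ, LpNormPer p (PhiF n θ) := by
  intro n hn p hp βb
  have hπ := Real.pi_pos
  set S : Set ℝ := { a : ℝ | ∃ φ : ℝ → ℝ, AdmPhi φ ∧
    a = LpNormPer p (fun x => Real.sin ((2*(n:ℝ) - 1) * x / 2) *
          ∫ t in (0:ℝ)..(2*π), Real.sin ((n:ℝ)*t - x/2 + π * βb n / 2) * φ t) } with hS
  have hAq : Aq n p βb = sSup S := rfl
  have hBddR : BddAbove (range fun θ' => LpNormPer p (PhiF n θ')) :=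
    ⟨Ub p, by rintro _ ⟨θ', rfl⟩; exact lp_bound p (phi_abs_le n θ')⟩
  have hub : ∀ a ∈ S, a ≤ (1/2) * ⨆ θ' : ℝ, LpNormPer p (PhiF n θ') := by
    rintro a ⟨φ, hφ, rfl⟩
    obtain ⟨r, α, hr0, hr1, heq⟩ := element_formula n p (π * βb n) hφ
    rw [heq]
    calc (r/2) * LpNormPer p (PhiF n (π * βb n + 2*α))
        ≤ (1/2) * LpNormPer p (PhiF n (π * βb n + 2*α)) :=
          mul_le_mul_of_nonneg_right (by linarith) (lp_nonneg _ _)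
      _ ≤ (1/2) * ⨆ θ' : ℝ, LpNormPer p (PhiF n θ') :=
          mul_le_mul_of_nonneg_left (le_ciSup hBddR (π * βb n + 2*α)) (by norm_num)
  have hne : S.Nonempty := by
    refine ⟨_, fun _ => (0:ℝ), ⟨fun t => rfl, ?_, ?_, ?_⟩, rfl⟩
    · exact integrableOn_zero
    · simp
    · simp
  have hBddS : BddAbove S := ⟨_, fun a ha => hub a ha⟩
  constructor
  · -- lower bound
    have key : ∀ k : ℕ, (Real.sin (((k:ℝ)+1)⁻¹) / (((k:ℝ)+1)⁻¹))
        * ((1/2) * LpNormPer p (PhiF n (π * βb n))) ≤ sSup S := by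
      intro k
      have hk0 : (0:ℝ) < ((k:ℝ)+1)⁻¹ := by positivity
      have hk1 : ((k:ℝ)+1)⁻¹ ≤ 1 := by
        have h1 : (1:ℝ) ≤ (k:ℝ)+1 := by
          have := Nat.cast_nonneg (α := ℝ) k; linarith
        have := inv_anti₀ one_pos h1
        simpa using this
      have hk2 : ((k:ℝ)+1)⁻¹ < π/2 := by
        have := Real.pi_gt_three; linarith
      refine le_csSup hBddS ?_
      exact ⟨testφ n ((k:ℝ)+1)⁻¹, tφ_adm hn hk0 hk2,
        (test_value hn hk0 hk2 p (π * βb n)).symm⟩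
    have hslope : Filter.Tendsto (fun x : ℝ => Real.sin x / x) (nhdsWithin 0 {0}ᶜ) (nhds 1) := by
      have h := Real.hasDerivAt_sin 0
      rw [hasDerivAt_iff_tendsto_slope] at h
      simp only [Real.cos_zero] at h
      exact Filter.Tendsto.congr (fun x => by simp [slope_def_field]) h
    have hseq : Filter.Tendsto (fun k : ℕ => ((k:ℝ)+1)⁻¹) Filter.atTop (nhds 0) := by
      exact (tendsto_one_div_add_atTop_nhds_zero_nat (𝕜 := ℝ)).congr (fun k => one_div _)
    have hseq' : Filter.Tendsto (fun k : ℕ => ((k:ℝ)+1)⁻¹) Filter.atTop (nhdsWithin 0 {0}ᶜ) :=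
      tendsto_nhdsWithin_of_tendsto_nhds_of_eventually_within _ hseq
        (Filter.Eventually.of_forall fun k => by
          simp only [mem_compl_iff, mem_singleton_iff]
          positivity)
    have hlim : Filter.Tendsto
        (fun k : ℕ => (Real.sin (((k:ℝ)+1)⁻¹) / (((k:ℝ)+1)⁻¹))
          * ((1/2) * LpNormPer p (PhiF n (π * βb n)))) Filter.atTop
        (nhds ((1/2) * LpNormPer p (PhiF n (π * βb n)))) := by
      have := (hslope.comp hseq').mul_const ((1/2) * LpNormPer p (PhiF n (π * βb n)))
      simpa using this
    rw [hAq]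
    exact le_of_tendsto' hlim key
  · rw [hAq]
    exact csSup_le hne hub
end

section
/- For every n ∈ ℕ, 1 ≤ p ≤ ∞, and every real sequence β̄ = (β_k), one has A_n(p) ≥ ‖ sin((2n−1)x/2) sin(−x/2 + πβ_n/2) ‖_p = (1/2)‖Φ_{n,πβ_n}‖_p (norms in x). -/
open MeasureTheory Real Set
open scoped ENNReal

/-! ### Auxiliary constructions -/

open Filter
open scoped Topology

/-- Indicator of the arc `{t : cos t ≥ cos h}` (an arc of half-width `h` around `0`, mod `2π`). -/
noncomputable def chi (h : ℝ) : ℝ → ℝ := fun t => if Real.cos h ≤ Real.cos t then 1 else 0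

lemma chi_meas (h : ℝ) : Measurable (chi h) := by
  unfold chi
  exact Measurable.ite (measurableSet_le measurable_const Real.continuous_cos.measurable)
    measurable_const measurable_const

lemma chi_nonneg (h t : ℝ) : 0 ≤ chi h t := by unfold chi; split <;> norm_num

lemma chi_le_one (h t : ℝ) : chi h t ≤ 1 := by unfold chi; split <;> norm_num

lemma chi_per (h t : ℝ) : chi h (t + 2*π) = chi h t := by
  unfold chi; rw [Real.cos_add_two_pi]

lemma chi_set {h : ℝ} (h0 : 0 < h) (h1 : h < π) :
    {t : ℝ | Real.cos h ≤ Real.cos t} ∩ Ioc (-π) π = Icc (-h) h := by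
  ext t
  simp only [mem_inter_iff, mem_setOf_eq, mem_Ioc, mem_Icc]
  constructor
  · rintro ⟨hc, ht1, ht2⟩
    have habs : |t| ≤ π := abs_le.2 ⟨ht1.le, ht2⟩
    have : |t| ≤ h := by
      by_contra hlt
      push_neg at hlt
      have := Real.strictAntiOn_cos ⟨h0.le, h1.le⟩ ⟨abs_nonneg t, habs⟩ hlt
      rw [Real.cos_abs] at this
      linarith
    exact abs_le.1 this
  · rintro ⟨ht1, ht2⟩
    have habs : |t| ≤ h := abs_le.2 ⟨ht1, ht2⟩
    refine ⟨?_, by linarith, by linarith⟩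
    have := Real.cos_le_cos_of_nonneg_of_le_pi (abs_nonneg t) h1.le habs
    rwa [Real.cos_abs] at this

lemma arc_core (F : ℝ → ℝ) {h : ℝ} (h0 : 0 < h) (h1 : h < π) :
    ∫ t in (-π)..π, F t * chi h t = ∫ t in (-h)..h, F t := by
  have hpi : (0:ℝ) < π := Real.pi_pos
  have hmeas : MeasurableSet {t : ℝ | Real.cos h ≤ Real.cos t} :=
    measurableSet_le measurable_const Real.continuous_cos.measurable
  rw [intervalIntegral.integral_of_le (by linarith : (-π:ℝ) ≤ π),
    intervalIntegral.integral_of_le (by linarith : (-h:ℝ) ≤ h)]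
  have hfun : (fun t => F t * chi h t) =
      Set.indicator {t : ℝ | Real.cos h ≤ Real.cos t} F := by
    funext t
    simp only [chi, Set.indicator, mem_setOf_eq]
    split <;> simp
  rw [hfun, integral_indicator hmeas, Measure.restrict_restrict hmeas, chi_set h0 h1,
    ← integral_Icc_eq_integral_Ioc]

lemma arc_shift (F : ℝ → ℝ) (hper : Function.Periodic F (2*π)) (a : ℝ) {h : ℝ}
    (h0 : 0 < h) (h1 : h < π) :
    ∫ t in (0:ℝ)..(2*π), F t * chi h (t - a) = ∫ u in (-h)..h, F (u + a) := by
  have key : (fun t => F t * chi h (t - a)) = fun t => (fun u => F (u + a) * chi h u) (t - a) := by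
    funext t; simp [sub_add_cancel]
  rw [key, intervalIntegral.integral_comp_sub_right (fun u => F (u + a) * chi h u) a]
  have hperG : Function.Periodic (fun u => F (u + a) * chi h u) (2*π) := by
    intro u
    simp only
    rw [show u + 2*π + a = (u + a) + 2*π by ring, hper (u + a)]
    unfold chi; rw [Real.cos_add_two_pi]
  have h2 : ∫ u in (0 - a)..(2*π - a), F (u + a) * chi h u
      = ∫ u in (-π)..(-π + 2*π), F (u + a) * chi h u := by
    have := hperG.intervalIntegral_add_eq (0 - a) (-π)
    rw [show 0 - a + 2*π = 2*π - a by ring] at this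
    simpa using this
  rw [h2, show (-π + 2*π : ℝ) = π by ring, arc_core (fun u => F (u + a)) h0 h1]

lemma arc_int (a : ℝ) {h : ℝ} (h0 : 0 < h) (h1 : h < π) :
    ∫ t in (0:ℝ)..(2*π), chi h (t - a) = 2 * h := by
  have := arc_shift (fun _ => (1:ℝ)) (fun _ => rfl) a h0 h1
  simp only [one_mul] at this
  rw [this]
  simp
  ring

lemma II_mul_chi (F : ℝ → ℝ) (hF : Continuous F) (h s A B : ℝ) :
    IntervalIntegrable (fun t => F t * chi h (t - s)) volume A B := by
  rw [intervalIntegrable_iff]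
  obtain ⟨C, hC⟩ := (isCompact_uIcc (a := A) (b := B)).exists_bound_of_continuousOn
    hF.continuousOn
  refine Integrable.mono' (g := fun _ => C)
    (integrableOn_const measure_Ioc_lt_top.ne) ?_ ?_
  · exact ((hF.measurable.mul ((chi_meas h).comp (measurable_id.sub_const s)))).aestronglyMeasurable
  · refine (ae_restrict_iff' measurableSet_uIoc).2 (ae_of_all _ fun t ht => ?_)
    have h1 : ‖F t‖ ≤ C := hC t (uIoc_subset_uIcc ht)
    have h2 : |chi h (t - s)| ≤ 1 := by
      rw [abs_of_nonneg (chi_nonneg _ _)]; exact chi_le_one _ _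
    calc ‖F t * chi h (t - s)‖ = ‖F t‖ * |chi h (t - s)| := by rw [norm_mul]; rfl
    _ ≤ C * 1 := by
        apply mul_le_mul h1 h2 (abs_nonneg _) ((norm_nonneg _).trans h1)
    _ = C := mul_one C

/-- The approximating admissible function: normalized difference of two arc indicators. -/
noncomputable def phiH (n : ℕ) (h : ℝ) : ℝ → ℝ :=
  fun t => (1/(4*h)) * (chi h t - chi h (t - π/n))

lemma sinper (n : ℕ) (c : ℝ) : Function.Periodic (fun t => Real.sin ((n:ℝ)*t + c)) (2*π) := by
  intro t
  simp only
  rw [show (n:ℝ)*(t + 2*π) + c = ((n:ℝ)*t + c) + n*(2*π) by ring, Real.sin_add_nat_mul_two_pi]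

lemma sin_arc {n : ℕ} (hn : 1 ≤ n) (c a : ℝ) {h : ℝ} (h0 : 0 < h) (h1 : h < π) :
    ∫ t in (0:ℝ)..(2*π), Real.sin ((n:ℝ)*t + c) * chi h (t - a)
      = 2 * Real.sin ((n:ℝ)*h) * Real.sin ((n:ℝ)*a + c) / n := by
  have hn0 : (n:ℝ) ≠ 0 := Nat.cast_ne_zero.2 (by omega)
  rw [arc_shift _ (sinper n c) a h0 h1]
  have : ∀ u : ℝ, (n:ℝ)*(u + a) + c = (n:ℝ)*u + ((n:ℝ)*a + c) := fun u => by ring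
  simp only [this]
  rw [intervalIntegral.integral_comp_mul_add (fun y => Real.sin y) hn0 ((n:ℝ)*a + c)]
  rw [integral_sin]
  rw [Real.cos_sub_cos]
  rw [show ((n:ℝ) * -h + ((n:ℝ)*a + c) + ((n:ℝ)*h + ((n:ℝ)*a + c)))/2 = (n:ℝ)*a + c by ring]
  rw [show ((n:ℝ) * -h + ((n:ℝ)*a + c) - ((n:ℝ)*h + ((n:ℝ)*a + c)))/2 = -((n:ℝ)*h) by ring]
  rw [Real.sin_neg]
  field_simp
  have := mul_inv_cancel₀ hn0
  linear_combination (Real.sin ((n:ℝ)*a + c) * Real.sin ((n:ℝ)*h) * 2) * this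

lemma cont_sin (n : ℕ) (c : ℝ) : Continuous (fun t : ℝ => Real.sin ((n:ℝ)*t + c)) := by
  fun_prop

lemma transform (n : ℕ) (hn : 1 ≤ n) {h : ℝ} (h0 : 0 < h) (h1 : h < π) (c : ℝ) :
    ∫ t in (0:ℝ)..(2*π), Real.sin ((n:ℝ)*t + c) * phiH n h t
      = Real.sin ((n:ℝ)*h) / ((n:ℝ)*h) * Real.sin c := by
  have hn0 : (n:ℝ) ≠ 0 := Nat.cast_ne_zero.2 (by omega)
  have key : ∀ t : ℝ, Real.sin ((n:ℝ)*t + c) * phiH n h t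
      = (1/(4*h)) * (Real.sin ((n:ℝ)*t + c) * chi h (t - 0)
          - Real.sin ((n:ℝ)*t + c) * chi h (t - π/n)) := by
    intro t; simp only [phiH, sub_zero]; ring
  simp only [key]
  rw [intervalIntegral.integral_const_mul,
    intervalIntegral.integral_sub (II_mul_chi _ (cont_sin n c) h 0 0 (2*π))
      (II_mul_chi _ (cont_sin n c) h (π/n) 0 (2*π)),
    sin_arc hn c 0 h0 h1, sin_arc hn c (π/n) h0 h1]
  rw [show (n:ℝ) * (π/n) + c = c + π by field_simp; ring, Real.sin_add_pi,
    mul_zero, zero_add]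
  field_simp
  ring

lemma II_chi (h s A B : ℝ) : IntervalIntegrable (fun t => chi h (t - s)) volume A B := by
  simpa using II_mul_chi (fun _ => (1:ℝ)) continuous_const h s A B

lemma phiH_eq (n : ℕ) (h : ℝ) : ∀ t : ℝ,
    phiH n h t = (1/(4*h)) * (chi h (t - 0) - chi h (t - π/n)) := by
  intro t; simp [phiH]

lemma II_phiH (n : ℕ) (h A B : ℝ) : IntervalIntegrable (phiH n h) volume A B := by
  have : phiH n h = fun t =>
      (1/(4*h)) * ((fun t => chi h (t - 0)) t - (fun t => chi h (t - π/n)) t) := by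
    funext t; simp [phiH]
  rw [this]
  exact ((II_chi h 0 A B).sub (II_chi h (π/n) A B)).const_mul _

lemma adm_phiH (n : ℕ) {h : ℝ} (h0 : 0 < h) (h1 : h < π) : AdmPhi (phiH n h) := by
  refine ⟨?_, ?_, ?_, ?_⟩
  · intro t
    simp only [phiH]
    rw [chi_per, show t + 2*π - π/n = (t - π/n) + 2*π by ring, chi_per]
  · have := II_phiH n h 0 (2*π)
    rw [intervalIntegrable_iff] at this
    rwa [uIoc_of_le (by positivity)] at this
  · simp only [phiH_eq n h]
    rw [intervalIntegral.integral_const_mul,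
      intervalIntegral.integral_sub (II_chi h 0 0 (2*π)) (II_chi h (π/n) 0 (2*π)),
      arc_int 0 h0 h1, arc_int (π/n) h0 h1, sub_self, mul_zero]
  · have hptws : ∀ t ∈ Icc (0:ℝ) (2*π), |phiH n h t|
        ≤ (1/(4*h)) * (chi h (t - 0) + chi h (t - π/n)) := by
      intro t _
      rw [phiH_eq n h t, abs_mul, abs_of_pos (by positivity : (0:ℝ) < 1/(4*h))]
      apply mul_le_mul_of_nonneg_left _ (by positivity)
      calc |chi h (t - 0) - chi h (t - π/n)| ≤ |chi h (t - 0)| + |chi h (t - π/n)| := by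
            rw [sub_eq_add_neg]; exact (abs_add_le _ _).trans (by rw [abs_neg])
      _ = chi h (t - 0) + chi h (t - π/n) := by
            rw [abs_of_nonneg (chi_nonneg _ _), abs_of_nonneg (chi_nonneg _ _)]
    have hle : (∫ t in (0:ℝ)..(2*π), |phiH n h t|)
        ≤ ∫ t in (0:ℝ)..(2*π), (1/(4*h)) * (chi h (t - 0) + chi h (t - π/n)) := by
      apply intervalIntegral.integral_mono_on (by positivity) ((II_phiH n h 0 (2*π)).abs)
        (((II_chi h 0 0 (2*π)).add (II_chi h (π/n) 0 (2*π))).const_mul _) hptws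
    refine hle.trans ?_
    rw [intervalIntegral.integral_const_mul,
      intervalIntegral.integral_add (II_chi h 0 0 (2*π)) (II_chi h (π/n) 0 (2*π)),
      arc_int 0 h0 h1, arc_int (π/n) h0 h1]
    rw [div_mul_eq_mul_div, one_mul]
    rw [div_le_one (by positivity)]
    linarith

lemma phiF_eq (n : ℕ) (θ : ℝ) (x : ℝ) :
    PhiF n θ x = 2 * (Real.sin ((2*(n:ℝ) - 1) * x / 2) * Real.sin (-x/2 + θ/2)) := by
  unfold PhiF
  have h2 := Real.cos_sub ((n:ℝ)*x - θ/2) (x - θ)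
  have h1 : Real.cos ((n:ℝ)*x - θ/2) * (1 - Real.cos (x - θ)) -
      Real.sin ((n:ℝ)*x - θ/2) * Real.sin (x - θ)
      = Real.cos ((n:ℝ)*x - θ/2) - Real.cos (((n:ℝ)*x - θ/2) - (x - θ)) := by
    rw [h2]; ring
  rw [h1, Real.cos_sub_cos,
    show (((n:ℝ)*x - θ/2) + (((n:ℝ)*x - θ/2) - (x - θ)))/2 = (2*(n:ℝ) - 1) * x / 2 by ring,
    show (((n:ℝ)*x - θ/2) - (((n:ℝ)*x - θ/2) - (x - θ)))/2 = -(-x/2 + θ/2) by ring,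
    Real.sin_neg]
  ring

lemma LpNormPer_smul (p : ℝ≥0∞) (k : ℝ) (f : ℝ → ℝ) :
    LpNormPer p (fun x => k * f x) = |k| * LpNormPer p f := by
  unfold LpNormPer
  have h : (fun x => k * f x) = k • f := by funext x; simp
  rw [h, eLpNorm_const_smul, ENNReal.toReal_mul]
  simp [Real.norm_eq_abs]

lemma tendsto_ratio (n : ℕ) (hn : 1 ≤ n) :
    Tendsto (fun h : ℝ => Real.sin ((n:ℝ)*h) / ((n:ℝ)*h)) (𝓝[>] 0) (𝓝 1) := by
  have hnpos : (0:ℝ) < n := by exact_mod_cast Nat.pos_of_ne_zero (by omega)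
  have h1 : Tendsto (fun y : ℝ => Real.sin y / y) (𝓝[≠] (0:ℝ)) (𝓝 1) := by
    have hd := Real.hasDerivAt_sin 0
    rw [hasDerivAt_iff_tendsto_slope, Real.cos_zero] at hd
    refine hd.congr' ?_
    filter_upwards with y
    simp [slope_def_field]
  have h2 : Tendsto (fun h : ℝ => (n:ℝ)*h) (𝓝[>] (0:ℝ)) (𝓝[≠] (0:ℝ)) := by
    rw [tendsto_nhdsWithin_iff]
    constructor
    · have : Tendsto (fun h : ℝ => (n:ℝ)*h) (𝓝 0) (𝓝 0) := by
        simpa using (continuous_mul_left (n:ℝ)).tendsto (0:ℝ)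
      exact this.mono_left nhdsWithin_le_nhds
    · filter_upwards [self_mem_nhdsWithin] with h hh
      exact (mul_pos hnpos hh).ne'
  exact h1.comp h2

lemma integral_bound {φ : ℝ → ℝ} (hφ : AdmPhi φ) (K : ℝ → ℝ) (hK : ∀ t, |K t| ≤ 1)
    (hKm : Measurable K) : |∫ t in (0:ℝ)..(2*π), K t * φ t| ≤ 1 := by
  have h2π : (0:ℝ) ≤ 2*π := by positivity
  have hφI : IntervalIntegrable φ volume 0 (2*π) := by
    rw [intervalIntegrable_iff, uIoc_of_le h2π]; exact hφ.2.1
  have hKφ : IntervalIntegrable (fun t => K t * φ t) volume 0 (2*π) := by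
    rw [intervalIntegrable_iff, uIoc_of_le h2π]
    exact Integrable.bdd_mul (c := 1) hφ.2.1 hKm.aestronglyMeasurable
      (ae_of_all _ fun t => by rw [Real.norm_eq_abs]; exact hK t)
  calc |∫ t in (0:ℝ)..(2*π), K t * φ t| ≤ ∫ t in (0:ℝ)..(2*π), |K t * φ t| :=
        intervalIntegral.abs_integral_le_integral_abs h2π
  _ ≤ ∫ t in (0:ℝ)..(2*π), |φ t| := by
      apply intervalIntegral.integral_mono_on h2π hKφ.abs hφI.abs
      intro t _
      rw [abs_mul]
      calc |K t| * |φ t| ≤ 1 * |φ t| :=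
            mul_le_mul_of_nonneg_right (hK t) (abs_nonneg _)
      _ = |φ t| := one_mul _
  _ ≤ 1 := hφ.2.2.2

lemma bddAboveS (n : ℕ) (p : ℝ≥0∞) (βb : ℕ → ℝ) :
    BddAbove { a : ℝ | ∃ φ : ℝ → ℝ, AdmPhi φ ∧
      a = LpNormPer p (fun x => Real.sin ((2*(n:ℝ) - 1) * x / 2) *
          ∫ t in (0:ℝ)..(2*π), Real.sin ((n:ℝ)*t - x/2 + π * βb n / 2) * φ t) } := by
  refine ⟨(((volume.restrict (Ioc (0:ℝ) (2*π))) Set.univ) ^ p.toReal⁻¹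
      * ENNReal.ofReal 1).toReal, ?_⟩
  rintro a ⟨φ, hφ, rfl⟩
  unfold LpNormPer
  apply ENNReal.toReal_mono
  · apply ENNReal.mul_ne_top _ (by simp)
    apply ENNReal.rpow_ne_top_of_nonneg (by positivity)
    rw [Measure.restrict_apply_univ]
    exact measure_Ioc_lt_top.ne
  · apply eLpNorm_le_of_ae_bound
    refine ae_of_all _ fun x => ?_
    rw [Real.norm_eq_abs, abs_mul]
    have hsin : ∀ y : ℝ, |Real.sin y| ≤ 1 := fun y =>
      abs_le.2 ⟨Real.neg_one_le_sin y, Real.sin_le_one y⟩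
    calc |Real.sin ((2*(n:ℝ) - 1) * x / 2)| *
          |∫ t in (0:ℝ)..(2*π), Real.sin ((n:ℝ)*t - x/2 + π * βb n / 2) * φ t|
        ≤ 1 * 1 := by
          refine mul_le_mul (hsin _) ?_ (abs_nonneg _) zero_le_one
          exact integral_bound hφ _ (fun t => hsin _) (by fun_prop)
    _ = 1 := one_mul 1

/-- **Estimate (27).**
`A_n(p) ≥ ‖ sin((2n−1)x/2) sin(−x/2 + πβ_n/2) ‖_p = (1/2)‖Φ_{n,πβ_n}‖_p`. -/
theorem statement12 :
    ∀ (n : ℕ), 1 ≤ n → ∀ (p : ℝ≥0∞), 1 ≤ p → ∀ (βb : ℕ → ℝ),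
      LpNormPer p (fun x => Real.sin ((2*(n:ℝ) - 1) * x / 2) *
          Real.sin (-x/2 + π * βb n / 2)) ≤ Aq n p βb ∧
      LpNormPer p (fun x => Real.sin ((2*(n:ℝ) - 1) * x / 2) *
          Real.sin (-x/2 + π * βb n / 2)) = (1/2) * LpNormPer p (PhiF n (π * βb n)) := by
  intro n hn p hp βb
  have hnpos : (0:ℝ) < n := by exact_mod_cast Nat.pos_of_ne_zero (by omega)
  constructor
  · -- Part 1: the lower bound for the supremum
    set L := LpNormPer p (fun x => Real.sin ((2*(n:ℝ) - 1) * x / 2) *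
        Real.sin (-x/2 + π * βb n / 2)) with hLdef
    have hh0pos : (0:ℝ) < π/(2*(n:ℝ)) := div_pos Real.pi_pos (by linarith)
    have key : ∀ h ∈ Ioo (0:ℝ) (π/(2*(n:ℝ))),
        Real.sin ((n:ℝ)*h)/((n:ℝ)*h) * L ≤ Aq n p βb := by
      rintro h ⟨hh0, hh1⟩
      have hn1 : (1:ℝ) ≤ n := by exact_mod_cast hn
      have hhalf : π/(2*(n:ℝ)) ≤ π/2 := by
        rw [div_le_div_iff₀ (by linarith) (by norm_num)]
        nlinarith [Real.pi_pos]
      have hπ : h < π := by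
        have := Real.pi_pos
        calc h < π/(2*(n:ℝ)) := hh1
        _ ≤ π/2 := hhalf
        _ < π := by linarith
      have hnh : (n:ℝ)*h < π/2 := by
        have := (mul_lt_mul_of_pos_left hh1 hnpos)
        calc (n:ℝ)*h < (n:ℝ) * (π/(2*(n:ℝ))) := this
        _ = π/2 := by field_simp
      have hsinpos : 0 < Real.sin ((n:ℝ)*h) := by
        apply Real.sin_pos_of_pos_of_lt_pi (mul_pos hnpos hh0)
        have := Real.pi_pos
        linarith
      apply le_csSup (bddAboveS n p βb)
      refine ⟨phiH n h, adm_phiH n hh0 hπ, ?_⟩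
      have hint : ∀ x : ℝ,
          (∫ t in (0:ℝ)..(2*π), Real.sin ((n:ℝ)*t - x/2 + π * βb n / 2) * phiH n h t)
          = Real.sin ((n:ℝ)*h)/((n:ℝ)*h) * Real.sin (-x/2 + π * βb n / 2) := by
        intro x
        rw [← transform n hn hh0 hπ (-x/2 + π * βb n / 2)]
        apply intervalIntegral.integral_congr
        intro t _
        simp only
        have harg : (n:ℝ)*t - x/2 + π * βb n / 2 = (n:ℝ)*t + (-x/2 + π * βb n / 2) := by ring
        rw [harg]
      rw [show (fun x => Real.sin ((2*(n:ℝ) - 1) * x / 2) *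
            ∫ t in (0:ℝ)..(2*π), Real.sin ((n:ℝ)*t - x/2 + π * βb n / 2) * phiH n h t)
          = fun x => (Real.sin ((n:ℝ)*h)/((n:ℝ)*h)) * (Real.sin ((2*(n:ℝ) - 1) * x / 2) *
            Real.sin (-x/2 + π * βb n / 2)) from funext fun x => by rw [hint x]; ring]
      rw [LpNormPer_smul, abs_of_pos (div_pos hsinpos (mul_pos hnpos hh0))]
    have htend : Filter.Tendsto (fun h : ℝ => Real.sin ((n:ℝ)*h)/((n:ℝ)*h) * L)
        (𝓝[>] (0:ℝ)) (𝓝 L) := by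
      have := (tendsto_ratio n hn).mul_const L
      simpa using this
    refine le_of_tendsto htend ?_
    filter_upwards [Ioo_mem_nhdsGT_of_mem
      (⟨le_refl (0:ℝ), hh0pos⟩ : (0:ℝ) ∈ Ico (0:ℝ) (π/(2*(n:ℝ))))] with h hh
    exact key h hh
  · -- Part 2: the identity with `PhiF`
    have hfun : (fun x => Real.sin ((2*(n:ℝ) - 1) * x / 2) *
        Real.sin (-x/2 + π * βb n / 2)) = fun x => (1/2) * PhiF n (π * βb n) x := by
      funext x
      rw [phiF_eq]
      ring
    rw [hfun, LpNormPer_smul]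
    norm_num
end

section
/- For every real r > 1 and every n ∈ ℕ, one has n^r Σ_{k=n+1}^∞ k^{−r} < e^{−r/(n+1)} ( 1 + (n+1)/(r−1) ). -/
open Set MeasureTheory

/-- **Estimate (51).** For every `r > 1` and `n ∈ ℕ`:
`n^r Σ_{k=n+1}^∞ k^{−r} < e^{−r/(n+1)} (1 + (n+1)/(r−1))`. -/
theorem statement19 :
    ∀ (r : ℝ), 1 < r → ∀ n : ℕ, 1 ≤ n →
      (n:ℝ) ^ r * ∑' k : ℕ, ((n+1+k : ℕ) : ℝ) ^ (-r) <
        Real.exp (-r / ((n:ℝ)+1)) * (1 + ((n:ℝ)+1) / (r-1)) := by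
  intro r hr n hn
  set N : ℝ := (n:ℝ) + 1 with hN
  have hNpos : (0:ℝ) < N := by positivity
  have hr0 : (0:ℝ) < r := by linarith
  have hr1 : (0:ℝ) < r - 1 := by linarith
  have hnpos : (0:ℝ) < (n:ℝ) := by exact_mod_cast hn
  have hsum : Summable (fun k : ℕ => ((n+1+k : ℕ) : ℝ) ^ (-r)) := by
    have h1 : Summable (fun m : ℕ => (m : ℝ) ^ (-r)) :=
      (Real.summable_nat_rpow (p := -r)).2 (by linarith)
    exact h1.comp_injective (i := fun k => n + 1 + k) (fun a b h => by simpa using h)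
  -- Tail bound : sum over k ≥ 1
  have tail : ∑' k : ℕ, ((n+1+(k+1) : ℕ) : ℝ) ^ (-r) ≤ N ^ (1-r) / (r-1) := by
    apply Real.tsum_le_of_sum_range_le (fun k => by positivity)
    intro m
    have hanti : AntitoneOn (fun x : ℝ => x ^ (-r)) (Icc N (N + m)) := by
      intro x hx y hy hxy
      exact Real.rpow_le_rpow_of_nonpos (lt_of_lt_of_le hNpos hx.1) hxy (by linarith)
    have h1 := hanti.sum_le_integral
    have h2 : ∑ i ∈ Finset.range m, ((n+1+(i+1) : ℕ) : ℝ) ^ (-r)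
        = ∑ i ∈ Finset.range m, (fun x : ℝ => x ^ (-r)) (N + ((i + 1 : ℕ) : ℝ)) := by
      apply Finset.sum_congr rfl
      intro i _
      push_cast
      rw [hN]
    rw [h2]
    refine le_trans h1 ?_
    have hint : IntegrableOn (fun x : ℝ => x ^ (-r)) (Ioi N) :=
      integrableOn_Ioi_rpow_of_lt (by linarith) hNpos
    have h3 : (∫ x in N..(N + (m:ℝ)), x ^ (-r)) ≤ ∫ x in Ioi N, x ^ (-r) := by
      rw [intervalIntegral.integral_of_le (le_add_of_nonneg_right m.cast_nonneg)]
      apply setIntegral_mono_set hint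
      · filter_upwards [ae_restrict_mem measurableSet_Ioi] with x hx
        exact Real.rpow_nonneg (le_of_lt (lt_trans hNpos hx)) _
      · exact Filter.Eventually.of_forall Ioc_subset_Ioi_self
    refine le_trans h3 ?_
    rw [integral_Ioi_rpow_of_lt (by linarith) hNpos]
    have : -r + 1 = 1 - r := by ring
    rw [this]
    have heq : -N ^ (1-r) / (1-r) = N ^ (1-r) / (r-1) := by
      have h1r : (1:ℝ) - r ≠ 0 := by linarith
      field_simp
      ring
    rw [heq]
  -- split off first term
  have key : ∑' k : ℕ, ((n+1+k : ℕ) : ℝ) ^ (-r) ≤ N ^ (-r) * (1 + N / (r-1)) := by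
    rw [Summable.tsum_eq_zero_add hsum]
    have h0 : ((n+1+0 : ℕ) : ℝ) ^ (-r) = N ^ (-r) := by norm_num [hN]
    rw [h0]
    have hNr : N ^ (1-r) = N ^ (-r) * N := by
      rw [show (1:ℝ) - r = -r + 1 by ring, Real.rpow_add hNpos, Real.rpow_one]
    have := tail
    rw [hNr] at this
    have hexp : N ^ (-r) * (1 + N / (r-1)) = N ^ (-r) + N ^ (-r) * N / (r-1) := by
      field_simp
    rw [hexp]
    linarith
  -- strict factor bound
  have hlt : (n:ℝ) ^ r * N ^ (-r) < Real.exp (-r / N) := by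
    have h1 : (n:ℝ) / N < Real.exp (-1 / N) := by
      have := Real.add_one_lt_exp (x := -1 / N) (by
        intro h
        have : (1:ℝ) / N ≠ 0 := by positivity
        rw [neg_div] at h
        exact this (neg_eq_zero.mp h))
      have h2 : (n:ℝ) / N = -1 / N + 1 := by
        field_simp
        rw [hN]; ring
      linarith [this]
    have h3 : ((n:ℝ) / N) ^ r < (Real.exp (-1 / N)) ^ r :=
      Real.rpow_lt_rpow (by positivity) h1 hr0
    have h4 : ((n:ℝ) / N) ^ r = (n:ℝ) ^ r * N ^ (-r) := by
      rw [Real.div_rpow hnpos.le hNpos.le, Real.rpow_neg hNpos.le, div_eq_mul_inv]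
    have h5 : (Real.exp (-1 / N)) ^ r = Real.exp (-r / N) := by
      rw [← Real.exp_mul]
      congr 1
      ring
    rw [h4, h5] at h3
    exact h3
  have hfac : (0:ℝ) < 1 + N / (r-1) := by positivity
  calc (n:ℝ) ^ r * ∑' k : ℕ, ((n+1+k : ℕ) : ℝ) ^ (-r)
      ≤ (n:ℝ) ^ r * (N ^ (-r) * (1 + N / (r-1))) :=
        mul_le_mul_of_nonneg_left key (Real.rpow_nonneg hnpos.le _)
    _ = ((n:ℝ) ^ r * N ^ (-r)) * (1 + N / (r-1)) := by ring
    _ < Real.exp (-r / N) * (1 + N / (r-1)) :=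
        mul_lt_mul_of_pos_right hlt hfac
end
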